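/- arXiv:math/9411228 — 4 statements merged into one kernel-verified Lean document; each statement's English description precedes it below -/
import Mathlib

section
/- Let a > 0, b > 0 and s > 0. Then ∫₀¹ x^{−1/2} (a x + b(1−x))^{−3/2} · sinh(2 √(s x / (a x + b(1−x)))) dx = (1/(b √s)) · (cosh(2 √(s/a)) − 1). -/
open MeasureTheory Set

/-- For `a,b,s > 0`:
`∫₀¹ x^{−1/2}(ax+b(1−x))^{−3/2} sinh(2√(sx/(ax+b(1−x)))) dx
  = (1/(b√s))(cosh(2√(s/a)) − 1)`. -/
theorem feynman_sinh_integral (a b s : ℝ) (ha : 0 < a) (hb : 0 < b) (hs : 0 < s) :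
    ∫ x in Ioo (0:ℝ) 1,
        x ^ (-(1:ℝ)/2) * (a * x + b * (1 - x)) ^ (-(3:ℝ)/2) *
          Real.sinh (2 * Real.sqrt (s * x / (a * x + b * (1 - x))))
      = 1 / (b * Real.sqrt s) * (Real.cosh (2 * Real.sqrt (s / a)) - 1) := by
  set f : ℝ → ℝ := fun x =>
    x ^ (-(1:ℝ)/2) * (a * x + b * (1 - x)) ^ (-(3:ℝ)/2) *
      Real.sinh (2 * Real.sqrt (s * x / (a * x + b * (1 - x)))) with hf
  set F : ℝ → ℝ := fun x =>
    Real.cosh (2 * Real.sqrt (s * x / (a * x + b * (1 - x)))) / (b * Real.sqrt s) with hF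
  have hc : 0 < min a b := lt_min ha hb
  -- D positive on [0,1]
  have hD : ∀ x ∈ Icc (0:ℝ) 1, min a b ≤ a * x + b * (1 - x) := by
    intro x hx
    rcases le_total a b with h | h
    · simp only [min_eq_left h]
      nlinarith [hx.1, hx.2]
    · simp only [min_eq_right h]
      nlinarith [hx.1, hx.2]
  -- derivative
  have hderiv : ∀ x ∈ Ioo (0:ℝ) 1, HasDerivAt F (f x) x := by
    intro x hx
    have hx0 : 0 < x := hx.1
    have hDx : 0 < a * x + b * (1 - x) :=
      lt_of_lt_of_le hc (hD x ⟨hx0.le, hx.2.le⟩)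
    have hg : HasDerivAt (fun y => s * y / (a * y + b * (1 - y)))
        ((s * (a * x + b * (1 - x)) - s * x * (a - b)) / (a * x + b * (1 - x)) ^ 2) x := by
      have h1 : HasDerivAt (fun y : ℝ => s * y) s x := by
        simpa using (hasDerivAt_id x).const_mul s
      have h2 : HasDerivAt (fun y : ℝ => a * y + b * (1 - y)) (a - b) x := by
        have h2' : HasDerivAt (fun y : ℝ => (a - b) * y + b) (a - b) x := by
          simpa using ((hasDerivAt_id x).const_mul (a - b)).add_const b
        exact h2'.congr_of_eventuallyEq (Filter.Eventually.of_forall fun y => by ring)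
      exact h1.div h2 (ne_of_gt hDx)
    have hgx : 0 < s * x / (a * x + b * (1 - x)) := div_pos (mul_pos hs hx0) hDx
    have hsq : HasDerivAt (fun y => Real.sqrt (s * y / (a * y + b * (1 - y))))
        (((s * (a * x + b * (1 - x)) - s * x * (a - b)) / (a * x + b * (1 - x)) ^ 2)
          / (2 * Real.sqrt (s * x / (a * x + b * (1 - x))))) x :=
      hg.sqrt (ne_of_gt hgx)
    have hcosh := ((hsq.const_mul 2).cosh).div_const (b * Real.sqrt s)
    refine hcosh.congr_deriv (Eq.symm ?_)
    simp only [hf]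
    have hnum : s * (a * x + b * (1 - x)) - s * x * (a - b) = s * b := by ring
    rw [hnum]
    set D := a * x + b * (1 - x) with hDdef
    have hsx' : Real.sqrt (s * x / D) = Real.sqrt s * Real.sqrt x / Real.sqrt D := by
      rw [Real.sqrt_div (by positivity), Real.sqrt_mul hs.le]
    have hx12 : x ^ (-(1:ℝ)/2) = (Real.sqrt x)⁻¹ := by
      rw [show (-(1:ℝ)/2) = -(1/2) by norm_num, Real.rpow_neg hx0.le, ← Real.sqrt_eq_rpow]
    have hD32 : D ^ (-(3:ℝ)/2) = (D * Real.sqrt D)⁻¹ := by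
      rw [show (-(3:ℝ)/2) = -(1+1/2) by norm_num, Real.rpow_neg hDx.le,
        Real.rpow_add hDx, Real.rpow_one, ← Real.sqrt_eq_rpow]
    have hS0 : 0 < Real.sqrt s := Real.sqrt_pos.mpr hs
    have hX0 : 0 < Real.sqrt x := Real.sqrt_pos.mpr hx0
    have hE0 : 0 < Real.sqrt D := Real.sqrt_pos.mpr hDx
    set S := Real.sqrt s with hSdef
    set X := Real.sqrt x with hXdef
    set E := Real.sqrt D with hEdef
    have hssq : S ^ 2 = s := Real.sq_sqrt hs.le
    have hxsq : X ^ 2 = x := Real.sq_sqrt hx0.le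
    have hDsq : E ^ 2 = D := Real.sq_sqrt hDx.le
    simp only [hf, hx12, hD32, hsx']
    rw [← hssq, ← hDsq]
    field_simp
  -- continuity of F on [0,1]
  have hcont : ContinuousOn F (Icc 0 1) := by
    apply ContinuousOn.div_const
    apply Real.continuous_cosh.comp_continuousOn
    apply ContinuousOn.mul continuousOn_const
    apply Real.continuous_sqrt.comp_continuousOn
    exact ContinuousOn.div (Continuous.continuousOn (by continuity))
      (Continuous.continuousOn (by continuity))
      (fun x hx => ne_of_gt (lt_of_lt_of_le hc (hD x hx)))
  -- integrability of f on [0,1]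
  set C : ℝ := (min a b) ^ (-(3:ℝ)/2) * Real.sinh (2 * Real.sqrt (s / min a b)) with hC
  have hint : IntervalIntegrable f volume 0 1 := by
    have hg : IntervalIntegrable (fun x => C * x ^ (-(1:ℝ)/2)) volume 0 1 :=
      (intervalIntegral.intervalIntegrable_rpow' (by norm_num)).const_mul C
    apply hg.mono_fun
    · apply Measurable.aestronglyMeasurable
      rw [hf]
      fun_prop
    · rw [Filter.EventuallyLE, ae_restrict_iff' measurableSet_uIoc]
      filter_upwards with x hx
      rw [Set.uIoc_of_le (zero_le_one' ℝ)] at hx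
      have hx0 : 0 < x := hx.1
      have hx1 : x ≤ 1 := hx.2
      have hDx : 0 < a * x + b * (1 - x) := lt_of_lt_of_le hc (hD x ⟨hx0.le, hx1⟩)
      have h1 : (a * x + b * (1 - x)) ^ (-(3:ℝ)/2) ≤ (min a b) ^ (-(3:ℝ)/2) :=
        Real.rpow_le_rpow_of_nonpos hc (hD x ⟨hx0.le, hx1⟩) (by norm_num)
      have h2 : Real.sinh (2 * Real.sqrt (s * x / (a * x + b * (1 - x))))
          ≤ Real.sinh (2 * Real.sqrt (s / min a b)) := by
        rw [Real.sinh_le_sinh]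
        apply mul_le_mul_of_nonneg_left _ (by norm_num)
        apply Real.sqrt_le_sqrt
        apply div_le_div₀ hs.le (by nlinarith) hc (hD x ⟨hx0.le, hx1⟩)
      have hs1 : 0 ≤ Real.sinh (2 * Real.sqrt (s * x / (a * x + b * (1 - x)))) := by
        rw [Real.sinh_nonneg_iff]; positivity
      have hx' : (0:ℝ) ≤ x ^ (-(1:ℝ)/2) := Real.rpow_nonneg hx0.le _
      have hD' : (0:ℝ) ≤ (a * x + b * (1 - x)) ^ (-(3:ℝ)/2) := Real.rpow_nonneg hDx.le _
      simp only [Real.norm_eq_abs, hf]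
      rw [abs_of_nonneg (by positivity), abs_of_nonneg (by positivity)]
      calc x ^ (-(1:ℝ)/2) * (a * x + b * (1 - x)) ^ (-(3:ℝ)/2) *
            Real.sinh (2 * Real.sqrt (s * x / (a * x + b * (1 - x))))
          ≤ x ^ (-(1:ℝ)/2) * ((min a b) ^ (-(3:ℝ)/2) * Real.sinh (2 * Real.sqrt (s / min a b))) := by
            rw [mul_assoc]
            apply mul_le_mul_of_nonneg_left _ hx'
            exact mul_le_mul h1 h2 hs1 (Real.rpow_nonneg hc.le _)
        _ = C * x ^ (-(1:ℝ)/2) := by rw [hC]; ring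
  have key := intervalIntegral.integral_eq_sub_of_hasDerivAt_of_le (zero_le_one' ℝ)
    hcont hderiv hint
  have hIoo : ∫ x in Ioo (0:ℝ) 1, f x = ∫ x in (0:ℝ)..1, f x := by
    rw [intervalIntegral.integral_of_le (zero_le_one' ℝ),
      MeasureTheory.integral_Ioc_eq_integral_Ioo]
  rw [hIoo, key, hF]
  norm_num [Real.sqrt_zero, Real.cosh_zero]
  ring
end

section
/- Let a > 0, b > 0 and c > 0. Then ∫₀¹ x^{1/2} (1−x)^{−1/2} (a x + b(1−x))^{−2} · I₁(c √(x(1−x)) / (a x + b(1−x))) dx = (2/(a c)) · (cosh(c/(2√(a b))) − 1), where I₁ denotes the modified Bessel function of the first kind of order 1. -/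
open MeasureTheory Set

/-- The modified Bessel function of the first kind of order 1,
`I₁(z) = Σ_{n=0}^∞ (z/2)^{2n+1}/(n!(n+1)!)`. -/
noncomputable def besselI1 (z : ℝ) : ℝ :=
  ∑' n : ℕ, (z / 2) ^ (2 * n + 1) / (n.factorial * (n + 1).factorial)


lemma betaNat (q : ℕ) : ∀ p : ℕ, ∫ t in (0:ℝ)..1, t ^ p * (1 - t) ^ q
    = (p.factorial * q.factorial : ℝ) / (p + q + 1).factorial := by
  induction q with
  | zero =>
    intro p
    simp only [pow_zero, mul_one, integral_pow, one_pow, Nat.factorial_zero, Nat.cast_one]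
    rw [show p + 0 + 1 = p + 1 by ring, Nat.factorial_succ]
    have h1 : ((p:ℝ)+1) ≠ 0 := by positivity
    have h2 : ((p.factorial:ℝ)) ≠ 0 := by positivity
    push_cast
    field_simp
    simp
  | succ q ih =>
    intro p
    have hparts : ∫ t in (0:ℝ)..1, (1 - t) ^ (q + 1) * (t ^ p)
        = (1-(1:ℝ))^(q+1) * ((1:ℝ)^(p+1)/(p+1)) - (1-(0:ℝ))^(q+1) * ((0:ℝ)^(p+1)/(p+1))
          - ∫ t in (0:ℝ)..1, (-((q:ℝ)+1) * (1 - t) ^ q) * (t ^ (p+1) / (p+1)) := by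
      apply intervalIntegral.integral_mul_deriv_eq_deriv_mul
        (u := fun t => (1 - t)^(q+1)) (u' := fun t => -((q:ℝ)+1) * (1-t)^q)
        (v := fun t => t^(p+1)/(p+1)) (v' := fun t => t^p)
      · intro x _
        have : HasDerivAt (fun t : ℝ => (1 - t)^(q+1)) ((((q:ℝ)+1) * (1-x)^q) * (0-1)) x := by
          have := (hasDerivAt_pow (q+1) (1-x)).comp x
            ((hasDerivAt_const x (1:ℝ)).sub (hasDerivAt_id x))
          exact this.congr_deriv (by push_cast; ring)
        exact this.congr_deriv (by ring)
      · intro x _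
        have : HasDerivAt (fun t : ℝ => t^(p+1)/(p+1)) ((((p:ℝ)+1) * x^p) / (p+1)) x :=
          (hasDerivAt_pow (p+1) x).div_const _ |>.congr_deriv (by push_cast; ring)
        have h1 : ((p:ℝ)+1) ≠ 0 := by positivity
        exact this.congr_deriv (by field_simp)
      · apply Continuous.intervalIntegrable; continuity
      · apply Continuous.intervalIntegrable; continuity
    have e1 : ∫ t in (0:ℝ)..1, t^p * (1-t)^(q+1) = ∫ t in (0:ℝ)..1, (1-t)^(q+1) * t^p :=
      intervalIntegral.integral_congr (fun t _ => mul_comm _ _)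
    have h1 : ((p:ℝ)+1) ≠ 0 := by positivity
    have e2 : ∫ t in (0:ℝ)..1, (-((q:ℝ)+1) * (1-t)^q) * (t^(p+1)/((p:ℝ)+1))
        = ∫ t in (0:ℝ)..1, -((((q:ℝ)+1)/((p:ℝ)+1)) * (t^(p+1)*(1-t)^q)) :=
      intervalIntegral.integral_congr (fun t _ => by field_simp)
    have h2 : ∫ t in (0:ℝ)..1, t ^ p * (1 - t) ^ (q+1)
        = ((q:ℝ)+1)/((p:ℝ)+1) * ∫ t in (0:ℝ)..1, t ^ (p+1) * (1 - t) ^ q := by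
      rw [e1, hparts]
      push_cast at e2 ⊢
      rw [e2, intervalIntegral.integral_neg, intervalIntegral.integral_const_mul]
      simp [zero_pow (Nat.succ_ne_zero p)]
    rw [h2, ih (p+1)]
    have h3 : ((p + q + 1 + 1).factorial : ℝ) ≠ 0 := by positivity
    have h4 : ((p+q+1).factorial : ℝ) ≠ 0 := by positivity
    rw [show p + (q+1) + 1 = (p + q + 1) + 1 by ring, show (p+1) + q + 1 = (p + q + 1) + 1 by ring]
    rw [Nat.factorial_succ (p+q+1), Nat.factorial_succ p, Nat.factorial_succ q]
    push_cast
    field_simp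


lemma keyIntegral (a b : ℝ) (ha : 0 < a) (hb : 0 < b) (p q : ℕ) :
    ∫ x in (0:ℝ)..1, x ^ p * (1 - x) ^ q / (a * x + b * (1 - x)) ^ (p + q + 2)
      = (p.factorial * q.factorial : ℝ)
        / ((p + q + 1).factorial * (a ^ (p+1) * b ^ (q+1))) := by
  have hD : ∀ x ∈ Set.uIcc (0:ℝ) 1, 0 < a * x + b * (1 - x) := by
    intro x hx
    rw [Set.uIcc_of_le zero_le_one] at hx
    obtain ⟨h0, h1⟩ := hx
    rcases eq_or_lt_of_le h0 with h|h
    · rw [← h]; simpa using hb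
    · nlinarith [mul_pos ha h, mul_nonneg hb.le (sub_nonneg.2 h1)]
  set f : ℝ → ℝ := fun x => a * x / (a * x + b * (1 - x)) with hf
  set f' : ℝ → ℝ := fun x => a * b / (a * x + b * (1 - x)) ^ 2 with hf'
  set g : ℝ → ℝ := fun t => t ^ p * (1 - t) ^ q / (a ^ (p+1) * b ^ (q+1)) with hg
  have hderiv : ∀ x ∈ Set.uIcc (0:ℝ) 1, HasDerivAt f (f' x) x := by
    intro x hx
    have hDx := (hD x hx).ne'
    have h1 : HasDerivAt (fun x : ℝ => a * x) a x := by
      simpa using (hasDerivAt_id x).const_mul a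
    have h2 : HasDerivAt (fun x : ℝ => a * x + b * (1 - x)) (a + b * (0 - 1)) x := by
      exact h1.add (((hasDerivAt_const x (1:ℝ)).sub (hasDerivAt_id x)).const_mul b)
    have := h1.div h2 hDx
    refine this.congr_deriv (Eq.symm ?_)
    show a * b / (a * x + b * (1 - x)) ^ 2 = _
    congr 1
    ring
  have hcont : ContinuousOn f' (Set.uIcc (0:ℝ) 1) := by
    apply ContinuousOn.div continuousOn_const
    · fun_prop
    · intro x hx; exact pow_ne_zero _ (hD x hx).ne'
  have hgc : Continuous g := by fun_prop
  have hsub := intervalIntegral.integral_comp_smul_deriv hderiv hcont hgc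
  have heq : ∫ x in (0:ℝ)..1, x ^ p * (1 - x) ^ q / (a * x + b * (1 - x)) ^ (p + q + 2)
      = ∫ x in (0:ℝ)..1, f' x • (g ∘ f) x := by
    apply intervalIntegral.integral_congr
    intro x hx
    have hDx := (hD x hx).ne'
    have h1mf : 1 - f x = b * (1 - x) / (a * x + b * (1 - x)) := by
      simp only [hf]
      field_simp
      ring
    have hane := ha.ne'
    have hbne := hb.ne'
    simp only [Function.comp, hg, smul_eq_mul]
    rw [h1mf]
    simp only [hf, hf', div_pow, mul_pow]
    field_simp
    ring
  have hf0 : f 0 = 0 := by simp [hf]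
  have hf1 : f 1 = 1 := by simp [hf, ha.ne']
  rw [heq, hsub, hf0, hf1]
  simp only [hg]
  rw [intervalIntegral.integral_div, betaNat q p]
  rw [div_div]

/-- For `a,b,c > 0`:
`∫₀¹ x^{1/2}(1−x)^{−1/2}(ax+b(1−x))^{−2} I₁(c√(x(1−x))/(ax+b(1−x))) dx
  = (2/(ac))(cosh(c/(2√(ab))) − 1)`. -/
theorem feynman_besselI1_integral (a b c : ℝ) (ha : 0 < a) (hb : 0 < b) (hc : 0 < c) :
    ∫ x in Ioo (0:ℝ) 1,
        x ^ ((1:ℝ)/2) * (1 - x) ^ (-(1:ℝ)/2) * (a * x + b * (1 - x)) ^ (-(2:ℝ)) *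
          besselI1 (c * Real.sqrt (x * (1 - x)) / (a * x + b * (1 - x)))
      = 2 / (a * c) * (Real.cosh (c / (2 * Real.sqrt (a * b))) - 1) := by
  set F : ℕ → ℝ → ℝ := fun n x =>
    (c/2) ^ (2*n+1) / (n.factorial * (n+1).factorial) *
      (x ^ (n+1) * (1 - x) ^ n / (a * x + b * (1 - x)) ^ (2*n+3)) with hF
  set v : ℕ → ℝ := fun n =>
    (c/2) ^ (2*n+1) / ((2*n+2).factorial * (a ^ (n+2) * b ^ (n+1))) with hv
  set u : ℝ := c / (2 * Real.sqrt (a * b)) with hu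
  have hab : (0:ℝ) < a * b := mul_pos ha hb
  have hsab : 0 < Real.sqrt (a * b) := Real.sqrt_pos.2 hab
  -- positivity of denominator on Icc
  have hD : ∀ x ∈ Icc (0:ℝ) 1, 0 < a * x + b * (1 - x) := by
    intro x hx
    obtain ⟨h0, h1⟩ := hx
    rcases eq_or_lt_of_le h0 with h|h
    · rw [← h]; simpa using hb
    · nlinarith [mul_pos ha h, mul_nonneg hb.le (sub_nonneg.2 h1)]
  -- termwise identity for v
  have hterm : ∀ n : ℕ, v n = 2 / (a * c) * (u ^ (2*(n+1)) / (2*(n+1)).factorial) := by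
    intro n
    have hsq : Real.sqrt (a*b) ^ (2*n+2) = (a*b) ^ (n+1) := by
      rw [show 2*n+2 = 2*(n+1) from by ring, pow_mul, Real.sq_sqrt hab.le]
    rw [hv]
    simp only [hu, show 2*(n+1) = 2*n+2 from by ring]
    rw [div_pow c (2*Real.sqrt (a*b)) (2*n+2), mul_pow, hsq]
    have h2 : ((2*n+2).factorial : ℝ) ≠ 0 := by positivity
    have h3 : (a:ℝ) ≠ 0 := ha.ne'
    have h4 : (b:ℝ) ≠ 0 := hb.ne'
    have h5 : (c:ℝ) ≠ 0 := hc.ne'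
    field_simp
    ring_nf
    simp
  -- summability of the cosh series
  have hg : Summable (fun n : ℕ => u ^ (2*n) / ((2*n).factorial : ℝ)) := by
    have hinj : Function.Injective (fun n : ℕ => 2*n) := fun m n h => by
      simp only at h; omega
    have := (Real.summable_pow_div_factorial u).comp_injective hinj
    exact this
  have hv_sum : Summable v := by
    have he : (fun n : ℕ => 2 / (a * c) * (u ^ (2*(n+1)) / (2*(n+1)).factorial)) = v := by
      funext n; exact (hterm n).symm
    rw [← he]
    apply Summable.mul_left
    have := hg.comp_injective Nat.succ_injective
    exact this
  -- the RHS as a tsum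
  have hRHS : 2 / (a * c) * (Real.cosh u - 1) = ∑' n : ℕ, v n := by
    rw [Real.cosh_eq_tsum, Summable.tsum_eq_zero_add hg]
    simp only [Nat.mul_zero, pow_zero, Nat.factorial_zero, Nat.cast_one, div_one]
    rw [add_sub_cancel_left, ← tsum_mul_left]
    exact (tsum_congr fun n => (hterm n).symm)
  -- value of each integral
  have hval : ∀ n : ℕ, ∫ x in Ioo (0:ℝ) 1, F n x = v n := by
    intro n
    rw [← integral_Ioc_eq_integral_Ioo, ← intervalIntegral.integral_of_le zero_le_one,
      hF]
    simp only
    rw [intervalIntegral.integral_const_mul]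
    have hk := keyIntegral a b ha hb (n+1) n
    rw [show (n+1) + n + 2 = 2*n+3 by ring, show (n+1) + n + 1 = 2*n+2 by ring] at hk
    rw [hk, hv]
    simp only
    have h2 : ((2*n+2).factorial : ℝ) ≠ 0 := by positivity
    have h6 : ((n:ℕ).factorial : ℝ) ≠ 0 := by positivity
    have h7 : (((n:ℕ)+1).factorial : ℝ) ≠ 0 := by positivity
    have h3 : (a:ℝ) ≠ 0 := ha.ne'
    have h4 : (b:ℝ) ≠ 0 := hb.ne'
    field_simp
  -- integrability of each F n
  have hFc : ∀ n : ℕ, ContinuousOn (F n) (Icc (0:ℝ) 1) := by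
    intro n
    apply ContinuousOn.mul continuousOn_const
    apply ContinuousOn.div
    · fun_prop
    · fun_prop
    · intro x hx; exact pow_ne_zero _ (hD x hx).ne'
  have hFint : ∀ n : ℕ, Integrable (F n) (volume.restrict (Ioo (0:ℝ) 1)) := fun n =>
    ((hFc n).integrableOn_Icc).mono_set Ioo_subset_Icc_self
  have hFnonneg : ∀ n : ℕ, ∀ x ∈ Ioo (0:ℝ) 1, 0 ≤ F n x := by
    intro n x hx
    have hDx := hD x (Ioo_subset_Icc_self hx)
    obtain ⟨h0, h1⟩ := hx
    have : (0:ℝ) ≤ 1 - x := by linarith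
    positivity
  -- the norm integrals
  have hnorm : ∀ n : ℕ, ∫ x in Ioo (0:ℝ) 1, ‖F n x‖ = v n := by
    intro n
    rw [← hval n]
    apply setIntegral_congr_fun measurableSet_Ioo
    intro x hx
    exact Real.norm_of_nonneg (hFnonneg n x hx)
  have hswap : ∑' n : ℕ, ∫ x in Ioo (0:ℝ) 1, F n x
      = ∫ x in Ioo (0:ℝ) 1, ∑' n : ℕ, F n x := by
    apply integral_tsum_of_summable_integral_norm hFint
    simpa only [hnorm] using hv_sum
  -- pointwise identity
  have hpt : ∀ x ∈ Ioo (0:ℝ) 1,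
      x ^ ((1:ℝ)/2) * (1 - x) ^ (-(1:ℝ)/2) * (a * x + b * (1 - x)) ^ (-(2:ℝ)) *
        besselI1 (c * Real.sqrt (x * (1 - x)) / (a * x + b * (1 - x)))
      = ∑' n : ℕ, F n x := by
    intro x hx
    obtain ⟨h0, h1⟩ := hx
    have h1x : (0:ℝ) < 1 - x := by linarith
    have hDx : 0 < a * x + b * (1 - x) := hD x ⟨h0.le, h1.le⟩
    have hsx : 0 < Real.sqrt x := Real.sqrt_pos.2 h0
    have hs1x : 0 < Real.sqrt (1-x) := Real.sqrt_pos.2 h1x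
    rw [besselI1, ← tsum_mul_left]
    apply tsum_congr
    intro n
    have hr1 : x ^ ((1:ℝ)/2) = Real.sqrt x := (Real.sqrt_eq_rpow x).symm
    have hr2 : (1-x) ^ (-(1:ℝ)/2) = (Real.sqrt (1-x))⁻¹ := by
      rw [neg_div, Real.rpow_neg h1x.le, Real.sqrt_eq_rpow]
    have hr3 : (a * x + b * (1 - x)) ^ (-(2:ℝ)) = ((a * x + b * (1 - x)) ^ (2:ℕ))⁻¹ := by
      rw [show (-(2:ℝ)) = -((2:ℕ):ℝ) by norm_num, Real.rpow_neg hDx.le, Real.rpow_natCast]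
    have hs : Real.sqrt (x * (1-x)) = Real.sqrt x * Real.sqrt (1-x) := Real.sqrt_mul h0.le _
    have hpow : (Real.sqrt x * Real.sqrt (1-x)) ^ (2*n+1)
        = (x * (1-x)) ^ n * (Real.sqrt x * Real.sqrt (1-x)) := by
      rw [pow_succ, pow_mul]
      congr 2
      rw [mul_pow, Real.sq_sqrt h0.le, Real.sq_sqrt h1x.le]
    have hx2 : Real.sqrt x * Real.sqrt x = x := Real.mul_self_sqrt h0.le
    have hzpow : ((c * (Real.sqrt x * Real.sqrt (1-x)) / (a*x+b*(1-x))) / 2) ^ (2*n+1)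
        = c ^ (2*n+1) * ((x*(1-x))^n * (Real.sqrt x * Real.sqrt (1-x)))
          / ((a*x+b*(1-x)) ^ (2*n+1) * 2 ^ (2*n+1)) := by
      rw [div_div, div_pow, mul_pow c (Real.sqrt x * Real.sqrt (1-x)) (2*n+1), hpow,
        mul_pow (a*x+b*(1-x)) 2 (2*n+1)]
    have hkey : Real.sqrt x * (Real.sqrt (1-x))⁻¹
          * ((x*(1-x))^n * (Real.sqrt x * Real.sqrt (1-x)))
        = x^(n+1) * (1-x)^n := by
      have e2 : Real.sqrt x * (Real.sqrt (1-x))⁻¹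
            * ((x*(1-x))^n * (Real.sqrt x * Real.sqrt (1-x)))
          = (Real.sqrt x * Real.sqrt x) * ((Real.sqrt (1-x))⁻¹ * Real.sqrt (1-x))
            * (x*(1-x))^n := by ring
      rw [e2, hx2, inv_mul_cancel₀ hs1x.ne', mul_one, mul_pow]
      ring
    rw [hr1, hr2, hr3, hF]
    simp only
    rw [hs, hzpow, ← hkey]
    have hDne := hDx.ne'
    have h6 : ((n:ℕ).factorial:ℝ) ≠ 0 := by positivity
    have h7 : (((n:ℕ)+1).factorial:ℝ) ≠ 0 := by positivity
    field_simp
    ring_nf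
    simp
  calc ∫ x in Ioo (0:ℝ) 1,
        x ^ ((1:ℝ)/2) * (1 - x) ^ (-(1:ℝ)/2) * (a * x + b * (1 - x)) ^ (-(2:ℝ)) *
          besselI1 (c * Real.sqrt (x * (1 - x)) / (a * x + b * (1 - x)))
      = ∫ x in Ioo (0:ℝ) 1, ∑' n : ℕ, F n x :=
        setIntegral_congr_fun measurableSet_Ioo hpt
    _ = ∑' n : ℕ, ∫ x in Ioo (0:ℝ) 1, F n x := hswap.symm
    _ = ∑' n : ℕ, v n := tsum_congr hval
    _ = 2 / (a * c) * (Real.cosh u - 1) := hRHS.symm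
end

section
/- Let a > 0, b > 0 and s > 0. Then ∫₀¹ x^{−1} (a x + b(1−x))^{−1} · sin(2 √(s x / (a x + b(1−x)))) dx = (2/b) · Si(2 √(s/a)), where Si is the sine integral. -/
open MeasureTheory Set

/-- The sine integral `Si(z) = ∫₀^z (sin t)/t dt`. -/
noncomputable def Si (z : ℝ) : ℝ := ∫ t in (0:ℝ)..z, Real.sin t / t

/-- For `a,b,s > 0`:
`∫₀¹ x^{−1}(ax+b(1−x))⁻¹ sin(2√(sx/(ax+b(1−x)))) dx = (2/b) Si(2√(s/a))`. -/
theorem feynman_sin_integral (a b s : ℝ) (ha : 0 < a) (hb : 0 < b) (hs : 0 < s) :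
    ∫ x in Ioo (0:ℝ) 1,
        x⁻¹ * (a * x + b * (1 - x))⁻¹ *
          Real.sin (2 * Real.sqrt (s * x / (a * x + b * (1 - x))))
      = 2 / b * Si (2 * Real.sqrt (s / a)) := by
  have hmeas : MeasurableSet (Ioo (0:ℝ) 1) := measurableSet_Ioo
  set c : ℝ := 2 * Real.sqrt (s / a) with hc
  set φ : ℝ → ℝ := fun x => 2 * Real.sqrt (s * x / (a * x + b * (1 - x))) with hφ
  set φd : ℝ → ℝ := fun x =>
    (s * b / (a * x + b * (1 - x)) ^ 2) / Real.sqrt (s * x / (a * x + b * (1 - x))) with hφd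
  have hDpos : ∀ x ∈ Icc (0:ℝ) 1, 0 < a * x + b * (1 - x) := by
    intro x hx
    rcases le_total a b with h | h
    · nlinarith [hx.1, hx.2]
    · nlinarith [hx.1, hx.2]
  have hupos : ∀ x ∈ Ioo (0:ℝ) 1, 0 < s * x / (a * x + b * (1 - x)) := by
    intro x hx
    exact div_pos (by nlinarith [hx.1]) (hDpos x (Ioo_subset_Icc_self hx))
  have hderiv : ∀ x ∈ Ioo (0:ℝ) 1, HasDerivAt φ (φd x) x := by
    intro x hx
    have hD := hDpos x (Ioo_subset_Icc_self hx)
    have h1 : HasDerivAt (fun y : ℝ => s * y) s x := by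
      simpa using (hasDerivAt_id x).const_mul s
    have h2 : HasDerivAt (fun y : ℝ => a * y + b * (1 - y)) (a - b) x := by
      have := ((hasDerivAt_id x).const_mul a).add
        (((hasDerivAt_const x (1:ℝ)).sub (hasDerivAt_id x)).const_mul b)
      refine this.congr_deriv ?_
      ring
    have hu' : HasDerivAt (fun y : ℝ => s * y / (a * y + b * (1 - y)))
        (s * b / (a * x + b * (1 - x)) ^ 2) x := by
      have := h1.div h2 hD.ne'
      refine this.congr_deriv ?_
      field_simp
      ring
    have hne : s * x / (a * x + b * (1 - x)) ≠ 0 := (hupos x hx).ne'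
    have := (hu'.sqrt hne).const_mul 2
    refine this.congr_deriv ?_
    simp only [hφd]
    ring
  have hφdpos : ∀ x ∈ Ioo (0:ℝ) 1, 0 < φd x := by
    intro x hx
    have hD := hDpos x (Ioo_subset_Icc_self hx)
    have := Real.sqrt_pos.mpr (hupos x hx)
    simp only [hφd]
    positivity
  have hmono : StrictMonoOn φ (Ioo (0:ℝ) 1) := by
    apply strictMonoOn_of_deriv_pos (convex_Ioo _ _)
    · intro x hx
      exact (hderiv x hx).continuousAt.continuousWithinAt
    · intro x hx
      rw [interior_Ioo] at hx
      rw [(hderiv x hx).deriv]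
      exact hφdpos x hx
  have hderivW : ∀ x ∈ Ioo (0:ℝ) 1, HasDerivWithinAt φ (φd x) (Ioo (0:ℝ) 1) x :=
    fun x hx => (hderiv x hx).hasDerivWithinAt
  have himg : φ '' Ioo (0:ℝ) 1 = Ioo 0 c := by
    apply Subset.antisymm
    · rintro t ⟨x, hx, rfl⟩
      have hD := hDpos x (Ioo_subset_Icc_self hx)
      have hux := hupos x hx
      constructor
      · simp only [hφ]
        have := Real.sqrt_pos.mpr hux
        positivity
      · simp only [hφ, hc]
        have h1 : s * x / (a * x + b * (1 - x)) < s / a := by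
          rw [div_lt_div_iff₀ hD ha]
          nlinarith [mul_pos (mul_pos hs hb) (by linarith [hx.2] : (0:ℝ) < 1 - x)]
        have := Real.sqrt_lt_sqrt hux.le h1
        linarith
    · rintro t ⟨ht0, htc⟩
      have hsa : (0:ℝ) < s / a := by positivity
      set v : ℝ := t ^ 2 / 4 with hv
      have hv0 : 0 < v := by positivity
      have hva : v < s / a := by
        have h2 : t ^ 2 < c ^ 2 := by
          have hc0 : 0 ≤ c := by positivity
          nlinarith
        have h3 : c ^ 2 = 4 * (s / a) := by
          rw [hc, mul_pow, Real.sq_sqrt hsa.le]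
          ring
        nlinarith
      have hvas : v * a < s := by
        have := (lt_div_iff₀ ha).mp hva
        linarith
      have hK : 0 < s - v * a + v * b := by nlinarith
      refine ⟨v * b / (s - v * a + v * b), ⟨by positivity, ?_⟩, ?_⟩
      · rw [div_lt_one hK]
        nlinarith
      · simp only [hφ]
        have hux : s * (v * b / (s - v * a + v * b)) /
            (a * (v * b / (s - v * a + v * b)) + b * (1 - v * b / (s - v * a + v * b))) = v := by
          rw [div_eq_iff]
          · field_simp
            ring
          · have : a * (v * b / (s - v * a + v * b)) + b * (1 - v * b / (s - v * a + v * b))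
                = b * s / (s - v * a + v * b) := by
              rw [one_sub_div hK.ne']
              simp only [mul_div_assoc', ← add_div]
              congr 1
              ring
            rw [this]
            positivity
        rw [hux, hv, show t ^ 2 / 4 = (t / 2) ^ 2 by ring, Real.sqrt_sq (by linarith)]
        ring
  have key : (∫ x in Ioo (0:ℝ) 1,
        x⁻¹ * (a * x + b * (1 - x))⁻¹ *
          Real.sin (2 * Real.sqrt (s * x / (a * x + b * (1 - x)))))
      = ∫ x in Ioo (0:ℝ) 1, |φd x| • (fun t => 2 / b * (Real.sin t / t)) (φ x) := by
    apply setIntegral_congr_fun hmeas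
    intro x hx
    have hD := hDpos x (Ioo_subset_Icc_self hx)
    have hux := hupos x hx
    have hrpos : 0 < Real.sqrt (s * x / (a * x + b * (1 - x))) := Real.sqrt_pos.mpr hux
    have hr2 : Real.sqrt (s * x / (a * x + b * (1 - x))) *
        Real.sqrt (s * x / (a * x + b * (1 - x))) = s * x / (a * x + b * (1 - x)) :=
      Real.mul_self_sqrt hux.le
    simp only [smul_eq_mul, abs_of_pos (hφdpos x hx)]
    simp only [hφ, hφd]
    set r := Real.sqrt (s * x / (a * x + b * (1 - x))) with hr
    have step : s * b / (a * x + b * (1 - x)) ^ 2 / r * (2 / b * (Real.sin (2 * r) / (2 * r)))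
        = Real.sin (2 * r) * (s / ((a * x + b * (1 - x)) ^ 2 * (r * r))) := by
      field_simp
    rw [step, hr2]
    have hxne : x ≠ 0 := ne_of_gt hx.1
    have : s / ((a * x + b * (1 - x)) ^ 2 * (s * x / (a * x + b * (1 - x))))
        = x⁻¹ * (a * x + b * (1 - x))⁻¹ := by
      rw [eq_comm, inv_mul_eq_div, div_eq_div_iff (by positivity) (by positivity)]
      field_simp
    rw [this]
    ring
  have himageint := integral_image_eq_integral_abs_deriv_smul hmeas hderivW hmono.injOn
      (fun t => 2 / b * (Real.sin t / t))
  rw [key, ← himageint, himg]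
  have hc0 : (0:ℝ) ≤ c := by positivity
  rw [Si, intervalIntegral.integral_of_le hc0, ← integral_Ioc_eq_integral_Ioo,
    ← integral_const_mul]
end

section
/- Let μ, ν, p, a, β be real numbers with μ < 1, μ + ν > 1, and p + a > 0. Then ∫_p^∞ (x+a)^{−ν} (x−p)^{−μ} · exp(β/(x+a)) dx = (Γ(1−μ) Γ(μ+ν−1) / ((p+a)^{μ+ν−1} Γ(ν))) · ₁F₁(μ+ν−1; ν; β/(p+a)). -/
open MeasureTheory Set

/-- Pochhammer symbol `(c)_n = c(c+1)⋯(c+n−1)` for a real `c`. -/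
noncomputable def poch (c : ℝ) (n : ℕ) : ℝ := ∏ i ∈ Finset.range n, (c + i)

/-- The confluent hypergeometric series `₁F₁(a;b;z)`. -/
noncomputable def hyp1F1 (a b z : ℝ) : ℝ :=
  ∑' n : ℕ, poch a n / poch b n * z ^ n / n.factorial

lemma poch_pos {c : ℝ} (hc : 0 < c) (n : ℕ) : 0 < poch c n :=
  Finset.prod_pos fun i _ => by positivity

lemma Gamma_add_nat {c : ℝ} (hc : 0 < c) (n : ℕ) :
    Real.Gamma (c + n) = poch c n * Real.Gamma c := by
  induction n with
  | zero => simp [poch]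
  | succ n ih =>
    have h : c + (n + 1 : ℕ) = (c + n) + 1 := by push_cast; ring
    rw [h, Real.Gamma_add_one (by positivity), ih]
    simp only [poch, Finset.prod_range_succ]
    push_cast; ring


lemma beta_integrableOn {u v : ℝ} (hu : 0 < u) (hv : 0 < v) :
    IntegrableOn (fun t : ℝ => t ^ (u - 1) * (1 - t) ^ (v - 1)) (Ioo 0 1) := by
  have h := (Complex.betaIntegral_convergent (u := (u:ℂ)) (v := (v:ℂ))
    (by simpa using hu) (by simpa using hv))
  rw [intervalIntegrable_iff_integrableOn_Ioo_of_le zero_le_one] at h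
  have heq : ∀ t ∈ Ioo (0:ℝ) 1,
      ((t:ℂ) ^ ((u:ℂ) - 1) * (1 - (t:ℂ)) ^ ((v:ℂ) - 1))
        = ((t ^ (u - 1) * (1 - t) ^ (v - 1) : ℝ) : ℂ) := by
    intro t ht
    rw [show ((u:ℂ) - 1) = ((u - 1 : ℝ) : ℂ) by push_cast; ring,
      show ((v:ℂ) - 1) = ((v - 1 : ℝ) : ℂ) by push_cast; ring,
      show (1 - (t:ℂ)) = ((1 - t : ℝ) : ℂ) by push_cast; ring,
      ← Complex.ofReal_cpow ht.1.le, ← Complex.ofReal_cpow (by linarith [ht.2]),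
      ← Complex.ofReal_mul]
  have h2 : IntegrableOn (fun t : ℝ => ((t ^ (u - 1) * (1 - t) ^ (v - 1) : ℝ) : ℂ)) (Ioo 0 1) :=
    h.congr_fun heq measurableSet_Ioo
  have h3 := h2.re
  simp at h3
  exact h3

lemma beta_eval {u v : ℝ} (hu : 0 < u) (hv : 0 < v) :
    ∫ t in Ioo (0:ℝ) 1, t ^ (u - 1) * (1 - t) ^ (v - 1)
      = Real.Gamma u * Real.Gamma v / Real.Gamma (u + v) := by
  have hG : Complex.Gamma u * Complex.Gamma v
      = Complex.Gamma (u + v) * Complex.betaIntegral u v :=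
    Complex.Gamma_mul_Gamma_eq_betaIntegral (by simpa using hu) (by simpa using hv)
  have hbeta : Complex.betaIntegral u v
      = ((∫ t in Ioo (0:ℝ) 1, t ^ (u - 1) * (1 - t) ^ (v - 1) : ℝ) : ℂ) := by
    rw [Complex.betaIntegral]
    have : ∀ t ∈ uIcc (0:ℝ) 1,
        ((t:ℂ) ^ ((u:ℂ) - 1) * (1 - (t:ℂ)) ^ ((v:ℂ) - 1))
          = ((t ^ (u - 1) * (1 - t) ^ (v - 1) : ℝ) : ℂ) := by
      intro t ht
      rw [uIcc_of_le zero_le_one] at ht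
      rw [show ((u:ℂ) - 1) = ((u - 1 : ℝ) : ℂ) by push_cast; ring,
        show ((v:ℂ) - 1) = ((v - 1 : ℝ) : ℂ) by push_cast; ring,
        show (1 - (t:ℂ)) = ((1 - t : ℝ) : ℂ) by push_cast; ring,
        ← Complex.ofReal_cpow ht.1, ← Complex.ofReal_cpow (by linarith [ht.2]),
        ← Complex.ofReal_mul]
    rw [intervalIntegral.integral_congr this, intervalIntegral.integral_ofReal,
      intervalIntegral.integral_of_le zero_le_one, integral_Ioc_eq_integral_Ioo]
  rw [hbeta, Complex.Gamma_ofReal, Complex.Gamma_ofReal,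
    show ((u:ℂ) + v) = ((u + v : ℝ) : ℂ) by push_cast; ring, Complex.Gamma_ofReal,
    ← Complex.ofReal_mul, ← Complex.ofReal_mul, Complex.ofReal_inj] at hG
  have hGuv : Real.Gamma (u + v) ≠ 0 := (Real.Gamma_pos_of_pos (by linarith)).ne'
  field_simp [hG]
  rw [hG]; ring

lemma subst_lemma {μ ν p a : ℝ} (hpa : 0 < p + a) (β : ℝ) :
    ∫ x in Ioi p, (x + a) ^ (-ν) * (x - p) ^ (-μ) * Real.exp (β / (x + a))
      = (p + a) ^ (1 - μ - ν) *
        ∫ t in Ioo (0:ℝ) 1,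
          t ^ (μ + ν - 2) * (1 - t) ^ (-μ) * Real.exp ((β / (p + a)) * t) := by
  set c := p + a with hc
  set f : ℝ → ℝ := fun t => c / t - a with hf
  set f' : ℝ → ℝ := fun t => -(c / t ^ 2) with hf'
  have himg : f '' Ioo 0 1 = Ioi p := by
    ext x
    simp only [mem_image, mem_Ioi, mem_Ioo]
    constructor
    · rintro ⟨t, ⟨ht0, ht1⟩, rfl⟩
      have : c < c / t := by
        rw [lt_div_iff₀ ht0]
        nlinarith
      simp only [hf]
      linarith
    · intro hx
      have hxa : (0:ℝ) < x + a := by linarith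
      refine ⟨c / (x + a), ⟨by positivity, ?_⟩, ?_⟩
      · rw [div_lt_one (by linarith)]
        linarith
      · have hxa : (0:ℝ) < x + a := by linarith
        simp only [hf]
        field_simp
        ring
  have hderiv : ∀ t ∈ Ioo (0:ℝ) 1, HasDerivWithinAt f (f' t) (Ioo 0 1) t := by
    intro t ht
    have : HasDerivAt f (c * -(t ^ 2)⁻¹) t :=
      ((hasDerivAt_inv ht.1.ne').const_mul c).sub_const a
    have h2 : f' t = c * -(t ^ 2)⁻¹ := by rw [hf']; field_simp
    rw [h2]
    exact this.hasDerivWithinAt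
  have hinj : InjOn f (Ioo 0 1) := by
    intro t1 ht1 t2 ht2 h
    simp only [hf, sub_left_inj] at h
    rw [div_eq_div_iff ht1.1.ne' ht2.1.ne'] at h
    exact mul_left_cancel₀ hpa.ne' (by linarith)
  rw [← himg, integral_image_eq_integral_abs_deriv_smul measurableSet_Ioo hderiv hinj]
  rw [← integral_const_mul]
  refine setIntegral_congr_fun measurableSet_Ioo fun t ht => ?_
  obtain ⟨ht0, ht1⟩ := ht
  have h1t : (0:ℝ) < 1 - t := by linarith
  have habs : |f' t| = c / t ^ 2 := by
    rw [hf', abs_neg, abs_of_pos (by positivity)]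
  have hfa : f t + a = c / t := by simp [hf]
  have hfp : f t - p = c * (1 - t) / t := by
    simp only [hf, hc]
    field_simp
    ring
  have hexp : β / (f t + a) = β / c * t := by
    rw [hfa]
    field_simp
  rw [smul_eq_mul, hexp, habs, hfa, hfp]
  have ht2 : t ^ 2 = t ^ (2:ℝ) := by
    rw [show (2:ℝ) = ((2:ℕ):ℝ) by norm_num, Real.rpow_natCast]
  have e1 : (c / t) ^ (-ν) = c ^ (-ν) * t ^ ν := by
    rw [Real.div_rpow hpa.le ht0.le, Real.rpow_neg ht0.le, div_inv_eq_mul]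
  have e2 : (c * (1 - t) / t) ^ (-μ) = c ^ (-μ) * (1 - t) ^ (-μ) * t ^ μ := by
    rw [Real.div_rpow (by positivity) ht0.le, Real.mul_rpow hpa.le h1t.le,
      Real.rpow_neg ht0.le (μ), div_inv_eq_mul]
  have e3 : c ^ (1 - μ - ν) = c * c ^ (-μ) * c ^ (-ν) := by
    rw [show 1 - μ - ν = 1 + -μ + -ν by ring, Real.rpow_add hpa, Real.rpow_add hpa,
      Real.rpow_one]
  have e4 : t ^ (μ + ν - 2) = t ^ μ * t ^ ν * (t ^ (2:ℝ))⁻¹ := by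
    rw [show μ + ν - 2 = μ + ν + -(2:ℝ) by ring, Real.rpow_add ht0, Real.rpow_add ht0,
      Real.rpow_neg ht0.le]
  rw [ht2, e1, e2, e3, e4]
  ring

lemma euler {u v : ℝ} (hu : 0 < u) (hv : 0 < v) (z : ℝ) :
    ∫ t in Ioo (0:ℝ) 1, t ^ (u - 1) * (1 - t) ^ (v - 1) * Real.exp (z * t)
      = Real.Gamma u * Real.Gamma v / Real.Gamma (u + v) * hyp1F1 u (u + v) z := by
  set g : ℝ → ℝ := fun t => t ^ (u - 1) * (1 - t) ^ (v - 1) with hg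
  set F : ℕ → ℝ → ℝ := fun n t => g t * ((z * t) ^ n / n.factorial) with hF
  have hmeas : ∀ n, AEStronglyMeasurable (F n) (volume.restrict (Ioo (0:ℝ) 1)) := by
    intro n
    apply Measurable.aestronglyMeasurable
    fun_prop
  have hsum : HasSum (fun n => ∫ t in Ioo (0:ℝ) 1, F n t)
      (∫ t in Ioo (0:ℝ) 1, t ^ (u - 1) * (1 - t) ^ (v - 1) * Real.exp (z * t)) := by
    apply hasSum_integral_of_dominated_convergence
      (bound := fun n t => g t * (|z| ^ n / n.factorial)) hmeas
    · intro n
      filter_upwards [ae_restrict_mem measurableSet_Ioo] with t ht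
      have hg0 : 0 ≤ g t :=
        mul_nonneg (Real.rpow_nonneg ht.1.le _) (Real.rpow_nonneg (by linarith [ht.2]) _)
      have : |z * t| ^ n ≤ |z| ^ n := by
        apply pow_le_pow_left₀ (abs_nonneg _)
        rw [abs_mul]
        calc |z| * |t| ≤ |z| * 1 := by
              apply mul_le_mul_of_nonneg_left _ (abs_nonneg z)
              rw [abs_of_pos ht.1]; exact ht.2.le
          _ = |z| := mul_one _
      rw [hF]
      simp only [norm_mul, Real.norm_eq_abs, abs_of_nonneg hg0, abs_div, abs_pow]
      rw [Nat.abs_cast]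
      apply mul_le_mul_of_nonneg_left _ hg0
      apply div_le_div_of_nonneg_right _ _ <;> first
        | exact this
        | positivity
    · filter_upwards with t
      exact (Real.summable_pow_div_factorial |z|).mul_left (g t)
    · have : (fun t => ∑' n : ℕ, g t * (|z| ^ n / n.factorial))
          = fun t => g t * Real.exp |z| := by
        funext t
        rw [tsum_mul_left, Real.exp_eq_exp_ℝ, NormedSpace.exp_eq_tsum_div]
      rw [this]
      exact (beta_integrableOn hu hv).mul_const _
    · filter_upwards [ae_restrict_mem measurableSet_Ioo] with t _
      have : HasSum (fun n : ℕ => (z * t) ^ n / n.factorial) (Real.exp (z * t)) := by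
        rw [Real.exp_eq_exp_ℝ]
        exact NormedSpace.expSeries_div_hasSum_exp (z * t)
      simpa [hF, hg, mul_assoc] using this.mul_left (g t)
  have hterm : ∀ n : ℕ, (∫ t in Ioo (0:ℝ) 1, F n t)
      = Real.Gamma u * Real.Gamma v / Real.Gamma (u + v)
        * (poch u n / poch (u + v) n * z ^ n / n.factorial) := by
    intro n
    have h1 : ∀ t ∈ Ioo (0:ℝ) 1,
        F n t = (z ^ n / n.factorial) * (t ^ ((u + n) - 1) * (1 - t) ^ (v - 1)) := by
      intro t ht
      rw [hF, hg]
      simp only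
      rw [mul_pow, show (t : ℝ) ^ (n : ℕ) = t ^ ((n : ℕ) : ℝ) from (Real.rpow_natCast t n).symm,
        show (u + (n:ℝ)) - 1 = (u - 1) + (n:ℝ) by ring, Real.rpow_add ht.1]
      ring
    rw [setIntegral_congr_fun measurableSet_Ioo h1, integral_const_mul,
      beta_eval (by positivity) hv, show u + (n:ℝ) + v = (u + v) + (n:ℝ) by ring,
      Gamma_add_nat hu n, Gamma_add_nat (by linarith : (0:ℝ) < u + v) n]
    have h2 : poch (u + v) n ≠ 0 := (poch_pos (by linarith) n).ne'
    have h3 : Real.Gamma (u + v) ≠ 0 := (Real.Gamma_pos_of_pos (by linarith)).ne'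
    have h4 : (n.factorial : ℝ) ≠ 0 := Nat.cast_ne_zero.mpr n.factorial_ne_zero
    field_simp
  calc ∫ t in Ioo (0:ℝ) 1, t ^ (u - 1) * (1 - t) ^ (v - 1) * Real.exp (z * t)
      = ∑' n : ℕ, ∫ t in Ioo (0:ℝ) 1, F n t := hsum.tsum_eq.symm
    _ = ∑' n : ℕ, Real.Gamma u * Real.Gamma v / Real.Gamma (u + v)
          * (poch u n / poch (u + v) n * z ^ n / n.factorial) := tsum_congr hterm
    _ = Real.Gamma u * Real.Gamma v / Real.Gamma (u + v) * hyp1F1 u (u + v) z := by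
        rw [hyp1F1, tsum_mul_left]


/-- For `μ < 1`, `μ + ν > 1`, `p + a > 0`:
`∫_p^∞ (x+a)^{−ν}(x−p)^{−μ} e^{β/(x+a)} dx
  = (Γ(1−μ)Γ(μ+ν−1)/((p+a)^{μ+ν−1}Γ(ν))) ₁F₁(μ+ν−1;ν;β/(p+a))`. -/
theorem fractional_integral_exp_hyp1F1 (μ ν p a β : ℝ) (hμ : μ < 1) (hμν : 1 < μ + ν)
    (hpa : 0 < p + a) :
    ∫ x in Ioi p, (x + a) ^ (-ν) * (x - p) ^ (-μ) * Real.exp (β / (x + a))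
      = Real.Gamma (1 - μ) * Real.Gamma (μ + ν - 1) /
          ((p + a) ^ (μ + ν - 1) * Real.Gamma ν) *
          hyp1F1 (μ + ν - 1) ν (β / (p + a)) := by
  have h1 : (0:ℝ) < μ + ν - 1 := by linarith
  have h2 : (0:ℝ) < 1 - μ := by linarith
  rw [subst_lemma hpa β]
  have he := euler h1 h2 (β / (p + a))
  rw [show μ + ν - 1 + (1 - μ) = ν by ring] at he
  rw [show (μ + ν - 1) - 1 = μ + ν - 2 by ring, show (1 - μ) - 1 = -μ by ring] at he
  rw [he]
  have h3 : (p + a) ^ (1 - μ - ν) = ((p + a) ^ (μ + ν - 1))⁻¹ := by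
    rw [show 1 - μ - ν = -(μ + ν - 1) by ring, Real.rpow_neg hpa.le]
  rw [h3]
  have h4 : ((p + a) : ℝ) ^ (μ + ν - 1) ≠ 0 := (Real.rpow_pos_of_pos hpa _).ne'
  field_simp
end
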